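/- Let n, k, i, j, m, l be positive integers with n/100 ≤ i, j < n/50 and n < k < n^{1.2}. If (m−1)·(⌈n/2⌉−j−l) + (l−1)·(⌊n/2⌋−i−m) + (i+j)·(m+l−2) = k, with 1 ≤ m ≤ ⌊n/2⌋−i and 1 ≤ l ≤ ⌈n/2⌉−j, then m + l ≤ 2 + 100·k/n (in particular m + l = O(k/n)). -/
import Mathlib


/-- In the drawing `D(i,j) = D_{⌊n/2⌋−i, ⌈n/2⌉−j, i+j}` with
`n/100 ≤ i, j < n/50` and `n < k < n^{1.2}`, if the edge from upper vertex `m` to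
lower vertex `l` has exactly `k` crossings, then `m + l ≤ 2 + 100·k/n`. -/
theorem stmt14 (n k i j m l : ℕ)
    (hn : 0 < n) (hi0 : 0 < i) (hj0 : 0 < j) (hm0 : 0 < m) (hl0 : 0 < l)
    (hi1 : (n : ℝ) / 100 ≤ i) (hi2 : (i : ℝ) < (n : ℝ) / 50)
    (hj1 : (n : ℝ) / 100 ≤ j) (hj2 : (j : ℝ) < (n : ℝ) / 50)
    (hk1 : n < k) (hk2 : (k : ℝ) < (n : ℝ) ^ (1.2 : ℝ))
    (hm : m ≤ n / 2 - i) (hl : l ≤ (n + 1) / 2 - j)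
    (heq : (m - 1) * ((n + 1) / 2 - j - l) + (l - 1) * (n / 2 - i - m)
        + (i + j) * (m + l - 2) = k) :
    (m : ℝ) + l ≤ 2 + 100 * (k : ℝ) / n := by
  have hnat : (i + j) * (m + l - 2) ≤ k := by omega
  have h2 : 2 ≤ m + l := by omega
  have hcast : ((i : ℝ) + j) * ((m : ℝ) + l - 2) ≤ k := by
    have := (Nat.cast_le (α := ℝ)).mpr hnat
    push_cast [Nat.cast_sub h2] at this
    linarith
  have hij : (n : ℝ) / 50 ≤ (i : ℝ) + j := by linarith
  have hml : (0 : ℝ) ≤ (m : ℝ) + l - 2 := by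
    have := (Nat.cast_le (α := ℝ)).mpr h2; push_cast at this; linarith
  have hnr : (0 : ℝ) < n := by exact_mod_cast hn
  have key : (n : ℝ) / 50 * ((m : ℝ) + l - 2) ≤ k := by
    calc (n : ℝ) / 50 * ((m : ℝ) + l - 2) ≤ ((i : ℝ) + j) * ((m : ℝ) + l - 2) :=
          mul_le_mul_of_nonneg_right hij hml
      _ ≤ k := hcast
  rw [div_mul_eq_mul_div, div_le_iff₀ (by norm_num)] at key
  have hk0 : (0 : ℝ) ≤ k := by positivity
  rw [← sub_le_iff_le_add']
  have : (m : ℝ) + l - 2 ≤ 50 * k / n := by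
    rw [le_div_iff₀ hnr]; nlinarith
  have h50 : 50 * (k : ℝ) / n ≤ 100 * k / n := by
    gcongr
    linarith
  linarith
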